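/- The dual lattice of L = {[[a, −b/N],[c, d]] : a,b,c,d ∈ ℤ, a ≡ d mod 2} inside V = M₂(ℚ), with respect to the bilinear form (x,y) = N·tr(x·adj(y)), equals L' = {[[a/(2N), −b/N],[c, d/(2N)]] : a,b,c,d ∈ ℤ, a ≡ d mod 2}. -/

import Mathlib

open Matrix

/-- The lattice `L = {[[a, −b/N],[c, d]] : a,b,c,d ∈ ℤ, a ≡ d mod 2}` in `M₂(ℚ)`. -/
def latL (N : ℕ) : Set (Matrix (Fin 2) (Fin 2) ℚ) :=
  {x | ∃ a b c d : ℤ, a % 2 = d % 2 ∧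
    x = !![(a : ℚ), -(b : ℚ)/(N : ℚ); (c : ℚ), (d : ℚ)]}

/-- The lattice `L' = {[[a/2N, −b/N],[c, d/2N]] : a,b,c,d ∈ ℤ, a ≡ d mod 2}`. -/
def latL' (N : ℕ) : Set (Matrix (Fin 2) (Fin 2) ℚ) :=
  {x | ∃ a b c d : ℤ, a % 2 = d % 2 ∧
    x = !![(a : ℚ)/(2*N : ℚ), -(b : ℚ)/(N : ℚ); (c : ℚ), (d : ℚ)/(2*N : ℚ)]}

/-- The dual lattice of `L` inside `V = M₂(ℚ)` with respect to the bilinear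
form `(x,y) = N·tr(x·adj(y))` equals `L'`. -/
theorem stmt6 (N : ℕ) (hN : 0 < N) :
    {x : Matrix (Fin 2) (Fin 2) ℚ |
      ∀ y ∈ latL N, ∃ m : ℤ, (N : ℚ) * (x * y.adjugate).trace = m} = latL' N := by
  have hNz : (N : ℚ) ≠ 0 := Nat.cast_ne_zero.mpr hN.ne'
  ext x
  simp only [Set.mem_setOf_eq]
  constructor
  · intro h
    have key : ∀ a b c d : ℤ, a % 2 = d % 2 →
        ∃ m : ℤ, (N : ℚ) * (x 0 0 * d - x 0 1 * c + x 1 1 * a) + x 1 0 * b = m := by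
      intro a b c d hab
      obtain ⟨m, hm⟩ := h !![(a : ℚ), -(b : ℚ)/(N : ℚ); (c : ℚ), (d : ℚ)]
        ⟨a, b, c, d, hab, rfl⟩
      refine ⟨m, ?_⟩
      rw [← hm]
      simp only [Matrix.adjugate_fin_two, Matrix.trace_fin_two, Matrix.mul_apply,
        Fin.sum_univ_two, Matrix.cons_val', Matrix.cons_val_zero, Matrix.cons_val_one,
        Matrix.head_cons, Matrix.head_fin_const, Matrix.empty_val', Matrix.cons_val_fin_one,
        Matrix.of_apply]
      field_simp
      ring
    obtain ⟨C, hC⟩ := key 0 1 0 0 rfl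
    obtain ⟨B, hB⟩ := key 0 0 1 0 rfl
    obtain ⟨D, hD⟩ := key 2 0 0 0 rfl
    obtain ⟨A, hA⟩ := key 0 0 0 2 rfl
    obtain ⟨E, hE⟩ := key 1 0 0 1 rfl
    push_cast at hC hB hD hA hE
    have hAD : (A : ℚ) + D = 2 * E := by linarith
    have hAD' : A + D = 2 * E := by exact_mod_cast hAD
    refine ⟨A, B, C, D, by omega, ?_⟩
    rw [Matrix.eta_fin_two x]
    have h00 : x 0 0 = (A : ℚ) / (2 * N) := by
      field_simp; linarith
    have h11 : x 1 1 = (D : ℚ) / (2 * N) := by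
      field_simp; linarith
    have h01 : x 0 1 = -(B : ℚ) / N := by
      field_simp; linarith
    have h10 : x 1 0 = (C : ℚ) := by linarith
    rw [h00, h01, h10, h11]
  · rintro ⟨A, B, C, D, hAD, rfl⟩ y ⟨a, b, c, d, had, rfl⟩
    have h2 : (A * d + D * a) % 2 = 0 := by
      have h1 : A * d + D * a ≡ D * d + D * d [ZMOD 2] :=
        Int.ModEq.add (Int.ModEq.mul_right d hAD) (Int.ModEq.mul_left D had)
      have h0 : (D * d + D * d) % 2 = 0 := by
        rw [show D * d + D * d = 2 * (D * d) by ring]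
        exact Int.mul_emod_right 2 _
      exact Eq.trans h1 h0
    obtain ⟨k, hk⟩ := Int.dvd_of_emod_eq_zero h2
    refine ⟨k + B * c + C * b, ?_⟩
    have hk' : (A : ℚ) * d + D * a = 2 * k := by exact_mod_cast hk
    simp only [Matrix.adjugate_fin_two, Matrix.trace_fin_two, Matrix.mul_apply,
      Fin.sum_univ_two, Matrix.cons_val', Matrix.cons_val_zero, Matrix.cons_val_one,
      Matrix.head_cons, Matrix.head_fin_const, Matrix.empty_val', Matrix.cons_val_fin_one,
      Matrix.of_apply]
    push_cast
    field_simp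
    linear_combination hk'
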